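/- A scheme satisfying the property (AF) (every finite subset of points is contained in an affine open) is separated. -/

import Mathlib

open AlgebraicGeometry

open CategoryTheory CategoryTheory.Limits AlgebraicGeometry.Scheme
  AlgebraicGeometry.Scheme.Pullback in
/-- A scheme satisfying property (AF) — every finite set of points is contained in an
affine open subset — is separated. -/
theorem stmt_15 (X : Scheme)
    (hAF : ∀ s : Set X, s.Finite →
      ∃ U : X.Opens, IsAffineOpen U ∧ s ⊆ ↑U) :
    X.IsSeparated := by
  have hpair : ∀ p : X × X, ∃ U : X.Opens, IsAffineOpen U ∧ p.1 ∈ U ∧ p.2 ∈ U := by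
    intro p
    obtain ⟨U, hU, hsub⟩ := hAF {p.1, p.2} (Set.toFinite _)
    exact ⟨U, hU, hsub (by simp), hsub (by simp)⟩
  choose U hUaff hU1 hU2 using hpair
  set f := terminal.from X with hf
  let 𝒰 : (⊤_ Scheme).OpenCover := Scheme.coverOfIsIso (𝟙 _)
  let e : ∀ i : 𝒰.I₀, pullback f (𝒰.f i) ⟶ X := fun i ↦ pullback.fst f (𝒰.f i)
  haveI he : ∀ i, IsIso (e i) := fun i ↦ by
    show IsIso (pullback.fst f (𝟙 _)); infer_instance
  let 𝒱 : ∀ i, ((𝒰.pullback₁ f).X i).OpenCover := fun (i : 𝒰.I₀) ↦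
    Cover.mkOfCovers (X × X) (fun p ↦ (U p).toScheme) (fun p ↦ ((U p).ι ≫ inv (e i) : (U p).toScheme ⟶ pullback f (𝒰.f i)))
      (fun x ↦ ⟨((e i) x, (e i) x), ⟨(e i) x, hU1 _⟩, by
        show (inv (e i)) ((e i) _) = x
        have h := (Scheme.Hom.comp_apply (e i) (inv (e i)) x).symm
        rw [IsIso.hom_inv_id] at h
        exact h⟩)
      (fun p ↦ @IsOpenImmersion.comp _ _ _ _ _ inferInstance
        (@IsOpenImmersion.of_isIso _ _ _ (@IsIso.inv_isIso _ _ _ _ (e i) (he i))))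
  haveI : ∀ (i : 𝒰.I₀) j, IsAffine ((𝒱 i).X j) := fun i j ↦ hUaff j
  haveI : ∀ i, IsAffine (𝒰.X i) := fun i ↦ by
    show IsAffine (⊤_ Scheme); infer_instance
  have hcomp : ∀ (i : 𝒰.I₀) (j : X × X), (𝒱 i).f j ≫ pullback.fst f (𝒰.f i) = (U j).ι := by
    intro i j
    show ((U j).ι ≫ inv (e i)) ≫ e i = (U j).ι
    rw [Category.assoc, IsIso.inv_hom_id, Category.comp_id]
  haveI : ∀ i : 𝒰.I₀, Mono (𝒰.f i) := fun i ↦ by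
    show Mono (𝟙 (⊤_ Scheme)); infer_instance
  have htop : diagonalCoverDiagonalRange f 𝒰 𝒱 = ⊤ := by
    rw [← top_le_iff]
    rintro x -
    refine TopologicalSpace.Opens.mem_iSup.mpr
      ⟨⟨PUnit.unit, ((pullback.fst f f) x, (pullback.snd f f) x)⟩, ?_⟩
    show x ∈ Set.range _
    erw [diagonalCover_map f 𝒰 𝒱 ⟨PUnit.unit, ((pullback.fst f f) x, (pullback.snd f f) x),
      ((pullback.fst f f) x, (pullback.snd f f) x)⟩]
    haveI hm : Mono (𝒰.f PUnit.unit) := this PUnit.unit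
    erw [range_map (i₃ := 𝒰.f PUnit.unit)]
    constructor
    · erw [hcomp, Scheme.Opens.range_ι]
      exact hU1 _
    · erw [hcomp, Scheme.Opens.range_ι]
      exact hU2 _
  constructor
  constructor
  refine IsZariskiLocalAtTarget.of_iSup_eq_top (fun i : PUnit.{0} ↦ ⊤) (by simp) fun _ ↦ ?_
  rw [← htop]
  exact isClosedImmersion_diagonal_restrict_diagonalCoverDiagonalRange f 𝒰 𝒱
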